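/- For positive integers m and n, the rational function (1-q)/(1-q^{m+n}) times the product of Gaussian binomial coefficients [m+n-2 choose m-1]_q * [n choose m]_q * [2n choose n]_q is a polynomial in q with integer coefficients. -/
import Mathlib

open Polynomial

/-- The Gaussian binomial coefficient `[n choose k]_q` as a polynomial in `ℤ[q]`,
defined via the `q`-Pascal recurrence `[n+1, k+1]_q = [n, k]_q + q^(k+1) [n, k+1]_q`. -/
noncomputable def qbinom : ℕ → ℕ → Polynomial ℤ
  | _, 0 => 1
  | 0, _ + 1 => 0
  | n + 1, k + 1 => qbinom n k + Polynomial.X ^ (k + 1) * qbinom n (k + 1)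

lemma qbinom_zero (n : ℕ) : qbinom n 0 = 1 := by cases n <;> rfl

lemma qbinom_eq_zero : ∀ n k, n < k → qbinom n k = 0 := by
  intro n
  induction n with
  | zero => intro k hk; match k, hk with | k+1, _ => rfl
  | succ n ih =>
    intro k hk
    match k, hk with
    | k+1, hk =>
      show qbinom n k + X ^ (k+1) * qbinom n (k+1) = 0
      rw [ih k (by omega), ih (k+1) (by omega)]
      ring

lemma qbinom_self : ∀ n, qbinom n n = 1 := by
  intro n
  induction n with
  | zero => rfl
  | succ n ih =>
    show qbinom n n + X ^ (n+1) * qbinom n (n+1) = 1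
    rw [ih, qbinom_eq_zero n (n+1) (by omega)]
    ring

/-- The q-factorial-like product `∏_{i=1}^n (1 - q^i)`. -/
noncomputable def qfact (n : ℕ) : Polynomial ℤ := ∏ i ∈ Finset.range n, (1 - X ^ (i+1))

lemma qfact_zero : qfact 0 = 1 := by simp [qfact]

lemma qfact_succ (n : ℕ) : qfact (n+1) = qfact n * (1 - X ^ (n+1)) := by
  simp [qfact, Finset.prod_range_succ]

/-- Key factorization identity for Gaussian binomials. -/
lemma key : ∀ s a b, a + b = s → qbinom (a+b) a * qfact a * qfact b = qfact (a+b) := by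
  intro s
  induction s with
  | zero => intro a b h; obtain ⟨rfl, rfl⟩ : a = 0 ∧ b = 0 := by omega
            simp [qbinom_zero, qfact_zero]
  | succ s ih =>
    intro a b h
    match a, b with
    | 0, b => simp [qbinom_zero, qfact_zero]
    | a+1, 0 => simp [qbinom_self, qfact_zero]
    | a+1, b+1 =>
      have hs : a + (b+1) = s := by omega
      have hs2 : (a+1) + b = s := by omega
      have h1 := ih a (b+1) hs
      have h2 := ih (a+1) b hs2
      rw [hs] at h1
      rw [hs2] at h2
      have hrw : a + 1 + (b + 1) = s + 1 := by omega
      rw [hrw]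
      show (qbinom s a + X ^ (a+1) * qbinom s (a+1)) * qfact (a+1) * qfact (b+1) = qfact (s+1)
      rw [qfact_succ a, qfact_succ b, qfact_succ s] at *
      obtain rfl : s = a + b + 1 := by omega
      linear_combination (1 - X^(a+1)) * h1 + X^(a+1) * (1 - X^(b+1)) * h2

noncomputable abbrev Φ (d : ℕ) : Polynomial ℚ := cyclotomic d ℚ

lemma not_dvd_one_sub_X_pow {d i : ℕ} (hd : 0 < d) (hi : ¬ d ∣ i) :
    ¬ Φ d ∣ (1 - X ^ i : Polynomial ℚ) := by
  intro h
  have hmap : (cyclotomic d ℂ) ∣ (1 - X ^ i : Polynomial ℂ) := by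
    have := Polynomial.map_dvd (algebraMap ℚ ℂ) h
    simpa [map_cyclotomic] using this
  set ζ : ℂ := Complex.exp (2 * Real.pi * Complex.I / d)
  have hprim : IsPrimitiveRoot ζ d := Complex.isPrimitiveRoot_exp d hd.ne'
  have hroot : IsRoot (cyclotomic d ℂ) ζ := hprim.isRoot_cyclotomic hd
  obtain ⟨c, hc⟩ := hmap
  have : (1 : ℂ) - ζ ^ i = 0 := by
    have := congrArg (Polynomial.eval ζ) hc
    simpa [IsRoot.def.mp hroot] using this
  exact hi ((hprim.pow_eq_one_iff_dvd i).mp (by linear_combination -this))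

lemma one_sub_X_pow_eq {d i : ℕ} (hd : 0 < d) (hi : 0 < i) (hdvd : d ∣ i) :
    ∃ h : Polynomial ℚ, (1 - X ^ i : Polynomial ℚ) = Φ d * h ∧ ¬ Φ d ∣ h := by
  have h1 : Φ d ∣ (X ^ i - 1 : Polynomial ℚ) := by
    refine dvd_trans (cyclotomic.dvd_X_pow_sub_one d ℚ) ?_
    obtain ⟨k, rfl⟩ := hdvd
    have := sub_dvd_pow_sub_pow (X ^ d : Polynomial ℚ) 1 k
    simpa [← pow_mul] using this
  obtain ⟨c, hc⟩ := h1
  refine ⟨-c, by linear_combination -hc, ?_⟩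
  intro hdc
  have hsf : Squarefree (X ^ i - 1 : Polynomial ℚ) := by
    have : Separable (X ^ i - C (1:ℚ)) :=
      separable_X_pow_sub_C 1 (by exact_mod_cast hi.ne') one_ne_zero
    simpa using this.squarefree
  have : IsUnit (Φ d) := hsf (Φ d) (by rw [hc]; exact mul_dvd_mul_left _ ((dvd_neg).mp hdc))
  exact (cyclotomic.irreducible_rat hd).not_isUnit this

lemma phi_not_dvd_one : ∀ {d : ℕ}, 0 < d → ¬ Φ d ∣ (1 : Polynomial ℚ) := by
  intro d hd h
  exact (cyclotomic.irreducible_rat hd).not_isUnit (isUnit_of_dvd_one h)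

noncomputable def qmap (f : Polynomial ℤ) : Polynomial ℚ := f.map (Int.castRingHom ℚ)

lemma qmap_mul (f g : Polynomial ℤ) : qmap (f * g) = qmap f * qmap g := Polynomial.map_mul _

lemma qfact_val (d : ℕ) (hd : 0 < d) :
    ∀ n : ℕ, ∃ g : Polynomial ℚ, qmap (qfact n) = Φ d ^ (n / d) * g ∧ ¬ Φ d ∣ g := by
  intro n
  induction n with
  | zero => exact ⟨1, by simp [qmap, qfact_zero], phi_not_dvd_one hd⟩
  | succ n ih =>
    obtain ⟨g, hg, hgnd⟩ := ih
    have hprime : Prime (Φ d) := (cyclotomic.irreducible_rat hd).prime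
    have hmapstep : qmap (qfact (n+1)) = qmap (qfact n) * (1 - X ^ (n+1) : Polynomial ℚ) := by
      rw [qfact_succ, qmap_mul]
      congr 1
      simp [qmap]
    by_cases hdvd : d ∣ (n+1)
    · obtain ⟨h, hh, hhnd⟩ := one_sub_X_pow_eq hd (Nat.succ_pos n) hdvd
      refine ⟨g * h, ?_, fun hc => (hprime.dvd_mul.mp hc).elim hgnd hhnd⟩
      rw [hmapstep, hg, hh, Nat.succ_div, if_pos hdvd]
      ring
    · refine ⟨g * (1 - X ^ (n+1)), ?_,
        fun hc => (hprime.dvd_mul.mp hc).elim hgnd (not_dvd_one_sub_X_pow hd hdvd)⟩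
      rw [hmapstep, hg, Nat.succ_div, if_neg hdvd]
      ring

/-- The carry lemma: `Φ_d ∣ [a+b choose a]_q` when adding `a` and `b` has a carry mod `d`. -/
lemma cyclo_dvd_qbinom (d a b : ℕ) (hd : 0 < d) (h : d ≤ a % d + b % d) :
    Φ d ∣ qmap (qbinom (a+b) a) := by
  have hk := congrArg qmap (key (a+b) a b rfl)
  rw [qmap_mul, qmap_mul] at hk
  obtain ⟨ga, hga, hgand⟩ := qfact_val d hd a
  obtain ⟨gb, hgb, hgbnd⟩ := qfact_val d hd b
  obtain ⟨g, hg, _⟩ := qfact_val d hd (a+b)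
  have hdiv : (a+b)/d = a/d + b/d + 1 := by rw [Nat.add_div hd, if_pos h]
  rw [hga, hgb, hg, hdiv] at hk
  have hprime : Prime (Φ d) := (cyclotomic.irreducible_rat hd).prime
  have hcancel : qmap (qbinom (a+b) a) * (ga * gb) = Φ d * g := by
    have hne : (Φ d)^(a/d + b/d) ≠ 0 := pow_ne_zero _ (cyclotomic_ne_zero d ℚ)
    apply mul_left_cancel₀ hne
    linear_combination hk
  have hdvd : Φ d ∣ qmap (qbinom (a+b) a) * (ga * gb) := ⟨g, hcancel⟩
  rcases hprime.dvd_mul.mp hdvd with h1 | h1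
  · exact h1
  · exact absurd (hprime.dvd_mul.mp h1) (by tauto)

lemma mod_eq_zero {i m : ℕ} (hi : 0 < i) (hd : i ∣ m) : m % i = 0 :=
  Nat.eq_zero_of_dvd_of_lt ((Nat.dvd_mod_iff dvd_rfl).2 hd) (Nat.mod_lt _ hi)

lemma mod_sum_eq {i m n : ℕ} (hi : 0 < i) (hdvd : i ∣ m + n) (hm : ¬ i ∣ m) :
    m % i + n % i = i := by
  have h0 : (m % i + n % i) % i = 0 := by
    rw [← Nat.add_mod]; exact mod_eq_zero hi hdvd
  have hs : i ∣ m % i + n % i := Nat.dvd_of_mod_eq_zero h0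
  have hpos : 0 < m % i := Nat.pos_of_ne_zero (fun h => hm (Nat.dvd_of_mod_eq_zero h))
  have hle : i ≤ m % i + n % i := Nat.le_of_dvd (by omega) hs
  have hlt1 : m % i < i := Nat.mod_lt _ hi
  have hlt2 : n % i < i := Nat.mod_lt _ hi
  have h2 : i ∣ (m % i + n % i - i) := Nat.dvd_sub hs dvd_rfl
  have := Nat.eq_zero_of_dvd_of_lt h2 (by omega)
  omega

lemma pred_mod {i m : ℕ} (hi : 2 ≤ i) (hm : 0 < m) (hdvd : i ∣ m) : (m - 1) % i = i - 1 := by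
  have him : i ≤ m := Nat.le_of_dvd hm hdvd
  have heq : m - 1 = (m - i) + (i - 1) := by omega
  rw [heq, Nat.add_mod, mod_eq_zero (by omega) (Nat.dvd_sub hdvd dvd_rfl), Nat.zero_add,
    Nat.mod_mod_of_dvd _ dvd_rfl, Nat.mod_eq_of_lt (by omega)]

theorem stmt_3 (m n : ℕ) (hm : 0 < m) (hn : 0 < n) :
    ∃ P : Polynomial ℤ,
      (1 - Polynomial.X ^ (m + n)) * P =
        (1 - Polynomial.X) * (qbinom (m + n - 2) (m - 1) * qbinom n m * qbinom (2 * n) n) := by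
  by_cases hmn : n < m
  · exact ⟨0, by rw [qbinom_eq_zero n m hmn]; ring⟩
  push_neg at hmn
  have hN : 0 < m + n := by omega
  set B : Polynomial ℤ := qbinom (m + n - 2) (m - 1) * qbinom n m * qbinom (2 * n) n with hB
  have hQ : (X ^ (m + n) - 1 : Polynomial ℚ) ∣ qmap ((1 - X) * B) := by
    rw [← prod_cyclotomic_eq_X_pow_sub_one hN ℚ]
    apply Finset.prod_dvd_of_coprime
    · intro x _ y _ hxy
      exact cyclotomic.isCoprime_rat hxy
    · intro i hi
      obtain ⟨hidvd, -⟩ := Nat.mem_divisors.mp hi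
      have hipos : 0 < i := Nat.pos_of_dvd_of_pos hidvd hN
      rw [qmap_mul]
      by_cases hi1 : i = 1
      · subst hi1
        rw [cyclotomic_one]
        apply Dvd.dvd.mul_right
        have h1X : qmap (1 - X) = (1 - X : Polynomial ℚ) := by simp [qmap]
        rw [h1X]
        exact ⟨-1, by ring⟩
      · have hi2 : 2 ≤ i := by omega
        apply Dvd.dvd.mul_left
        rw [hB, qmap_mul, qmap_mul]
        by_cases hr0 : i ∣ m
        · have hin : i ∣ n := (Nat.dvd_add_right hr0).mp hidvd
          have hcarry : i ≤ (m - 1) % i + (n - 1) % i := by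
            rw [pred_mod hi2 hm hr0, pred_mod hi2 hn hin]; omega
          have hdq := cyclo_dvd_qbinom i (m - 1) (n - 1) (by omega) hcarry
          rw [show (m - 1) + (n - 1) = m + n - 2 from by omega] at hdq
          exact Dvd.dvd.mul_right (Dvd.dvd.mul_right hdq _) _
        · have hsum := mod_sum_eq (show 0 < i by omega) hidvd hr0
          have hmi : m % i < i := Nat.mod_lt _ (by omega)
          by_cases h2r : 2 * (m % i) ≤ i
          · have hcarry : i ≤ n % i + n % i := by omega
            have hdq := cyclo_dvd_qbinom i n n (by omega) hcarry
            rw [show n + n = 2 * n from by omega] at hdq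
            exact hdq.mul_left _
          · -- compute (n - m) % i
            have hti : (n - m) % i < i := Nat.mod_lt _ (by omega)
            have ht : (n - m) % i + 2 * (m % i) = 2 * i := by
              have e : (n - m) % i + 2 * (m % i) ≡ (n - m) + 2 * m [MOD i] :=
                Nat.ModEq.add (Nat.mod_modEq _ _) (Nat.ModEq.mul_left 2 (Nat.mod_modEq _ _))
              have e2 : n - m + 2 * m = m + n := by omega
              rw [e2] at e
              have h0 : ((n - m) % i + 2 * (m % i)) % i = 0 := by
                rw [Nat.ModEq] at e
                rw [e]; exact mod_eq_zero (by omega) hidvd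
              obtain ⟨c, hc⟩ := Nat.dvd_of_mod_eq_zero h0
              have hgt : i * 1 < i * c := by omega
              have hlt : i * c < i * 3 := by omega
              have hc1 : 1 < c := Nat.lt_of_mul_lt_mul_left hgt
              have hc3 : c < 3 := Nat.lt_of_mul_lt_mul_left hlt
              have hc2 : c = 2 := by omega
              subst hc2
              omega
            have hcarry : i ≤ m % i + (n - m) % i := by omega
            have hdq := cyclo_dvd_qbinom i m (n - m) (by omega) hcarry
            rw [show m + (n - m) = n from by omega] at hdq
            exact Dvd.dvd.mul_right (hdq.mul_left _) _
  have hZ : (X ^ (m + n) - 1 : Polynomial ℤ) ∣ (1 - X) * B := by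
    have hmonic : (X ^ (m + n) - 1 : Polynomial ℤ).Monic := by
      simpa using Polynomial.monic_X_pow_sub_C (1 : ℤ) hN.ne'
    rw [← Polynomial.map_dvd_map (Int.castRingHom ℚ) Int.cast_injective hmonic]
    have hmapeq : ((X ^ (m + n) - 1 : Polynomial ℤ)).map (Int.castRingHom ℚ)
        = (X ^ (m + n) - 1 : Polynomial ℚ) := by simp
    rw [hmapeq]
    exact hQ
  obtain ⟨Q, hQeq⟩ := hZ
  exact ⟨-Q, by linear_combination -hQeq⟩
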